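/- Let (d_k) be summable nonnegative reals, λ > 0, N ∈ ℕ, and ϑ the positive solution of ϑ = λ + (ϑ/N)∑_k d_k/(d_k + ϑ). Then ∂_λϑ − 1 = (∂_λϑ/N)·∑_k d_k²/(ϑ + d_k)². -/

import Mathlib

/-- differentiating the fixed-point equation yields
`∂_λϑ − 1 = (∂_λϑ/N)·∑_k d_k²/(ϑ + d_k)²`. -/
theorem sct_deriv_identity (d : ℕ → ℝ) (hd : ∀ k, 0 ≤ d k) (hsum : Summable d)
    (N : ℕ) (hN : 0 < N) (lam : ℝ) (hlam : 0 < lam) (θ : ℝ → ℝ)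
    (hθ : ∀ l, 0 < l → 0 < θ l ∧ θ l = l + (θ l / N) * ∑' k, d k / (d k + θ l))
    (D : ℝ) (hD : HasDerivAt θ D lam) :
    D - 1 = (D / N) * ∑' k, (d k) ^ 2 / (θ lam + d k) ^ 2 := by
  obtain ⟨hθpos, hθeq⟩ := hθ lam hlam
  set c : ℝ := θ lam / 2 with hc
  have hcpos : 0 < c := by positivity
  -- the series function
  set g : ℕ → ℝ → ℝ := fun k y => y * d k / (d k + y) with hg
  set g' : ℕ → ℝ → ℝ := fun k y => (d k) ^ 2 / (d k + y) ^ 2 with hg'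
  have hmem : θ lam ∈ Set.Ioi c := by simp [hc]; linarith
  have hden : ∀ k, ∀ y ∈ Set.Ioi c, 0 < d k + y := fun k y hy => by
    have := hd k; have : c < y := hy; linarith
  have hderiv : ∀ k, ∀ y ∈ Set.Ioi c, HasDerivAt (g k) (g' k y) y := by
    intro k y hy
    have h0 := hden k y hy
    have h := ((hasDerivAt_id y).mul_const (d k)).div
        (((hasDerivAt_id y).const_add (d k))) h0.ne'
    simp only [id_eq] at h
    refine HasDerivAt.congr_deriv (f := g k) h ?_
    simp only [hg']
    congr 1
    ring
  have hbound : ∀ k, ∀ y ∈ Set.Ioi c, ‖g' k y‖ ≤ d k / c := by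
    intro k y hy
    have h0 := hden k y hy
    have hyc : c < y := hy
    have hnn : 0 ≤ g' k y := by
      simp only [hg']
      exact div_nonneg (by positivity) (by positivity)
    rw [Real.norm_of_nonneg hnn]
    have h1 : d k / (d k + y) ≤ 1 := by
      rw [div_le_one h0]; linarith
    have h2 : d k / (d k + y) ≤ d k / c := by
      rw [div_le_div_iff₀ h0 hcpos]
      nlinarith [hd k]
    calc g' k y = (d k / (d k + y)) * (d k / (d k + y)) := by
          simp only [hg']; field_simp
      _ ≤ (d k / c) * 1 := by
          apply mul_le_mul h2 h1 (div_nonneg (hd k) h0.le) (div_nonneg (hd k) hcpos.le)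
      _ = d k / c := mul_one _
  have hsum0 : Summable fun k => g k (θ lam) := by
    apply Summable.of_nonneg_of_le (fun k =>
        div_nonneg (mul_nonneg hθpos.le (hd k)) (hden k _ hmem).le)
      (fun k => ?_) hsum
    have h0 := hden k (θ lam) hmem
    rw [div_le_iff₀ h0]
    have := hd k
    nlinarith
  have HF : HasDerivAt (fun y => ∑' k, g k y) (∑' k, g' k (θ lam)) (θ lam) :=
    hasDerivAt_tsum_of_isPreconnected (hsum.div_const c) isOpen_Ioi
      (isPreconnected_Ioi) hderiv hbound hmem hsum0 hmem
  -- composite has derivative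
  have Hcomp : HasDerivAt (fun l => l + (1 / (N : ℝ)) * ∑' k, g k (θ l))
      (1 + (1 / (N : ℝ)) * ((∑' k, g' k (θ lam)) * D)) lam :=
    (hasDerivAt_id lam).add (((HF.comp lam hD)).const_mul _)
  -- eventual equality with θ
  have heq : θ =ᶠ[nhds lam] fun l => l + (1 / (N : ℝ)) * ∑' k, g k (θ l) := by
    filter_upwards [isOpen_Ioi.mem_nhds (show lam ∈ Set.Ioi (0:ℝ) from hlam)] with l hl
    obtain ⟨hp, he⟩ := hθ l hl
    have : (∑' k, g k (θ l)) = θ l * ∑' k, d k / (d k + θ l) := by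
      simp only [hg, mul_div_assoc]
      exact tsum_mul_left
    rw [this]
    conv_lhs => rw [he]
    ring
  have Hθ : HasDerivAt θ (1 + (1 / (N : ℝ)) * ((∑' k, g' k (θ lam)) * D)) lam :=
    Hcomp.congr_of_eventuallyEq heq
  have hDeq : D = 1 + (1 / (N : ℝ)) * ((∑' k, g' k (θ lam)) * D) := hD.unique Hθ
  have hts : (∑' k, (d k) ^ 2 / (θ lam + d k) ^ 2) = ∑' k, g' k (θ lam) := by
    congr 1; funext k; rw [hg']; ring_nf
  rw [hts]
  have hN' : (N : ℝ) ≠ 0 := Nat.cast_ne_zero.mpr hN.ne'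
  field_simp at hDeq ⊢
  linarith [hDeq]
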